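/- Jacobi's theorem on minors of the adjugate: For an n×n matrix A over a commutative ring and subsets I, J ⊆ {1,...,n} with #I = #J = k, det((A^C)_{I,J}) = det(A)^{k-1} * det(A_{[n]∖I, [n]∖J}) (up to the appropriate sign ε(I)ε(J)), where A^C is the cofactor/adjugate-transpose matrix. -/

import Mathlib

open scoped BigOperators

open Equiv Equiv.Perm Finset Matrix

lemma jac_sign_eq_signAux {n : ℕ} (f : Perm (Fin n)) : Perm.sign f = Perm.signAux f := by
  refine Equiv.Perm.swap_induction_on f ?_ ?_
  · simp [Equiv.Perm.signAux_one]
  · intro f x y hxy ih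
    rw [Equiv.Perm.sign_mul, Equiv.Perm.signAux_mul, Equiv.Perm.sign_swap hxy,
      Equiv.Perm.signAux_swap hxy, ih]

lemma jac_signAux_eq_pow {n : ℕ} (f : Perm (Fin n)) :
    Perm.signAux f =
      (-1) ^ ((Equiv.Perm.finPairsLT n).filter fun x => f x.1 ≤ f x.2).card := by
  unfold Equiv.Perm.signAux
  rw [← Finset.prod_filter_mul_prod_filter_not (Equiv.Perm.finPairsLT n)
    (fun x => f x.1 ≤ f x.2)]
  rw [Finset.prod_congr rfl (fun x hx => if_pos (Finset.mem_filter.1 hx).2),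
    Finset.prod_congr rfl (fun x hx => if_neg (Finset.mem_filter.1 hx).2),
    Finset.prod_const, Finset.prod_const, one_pow, mul_one]

variable {n k : ℕ}

def jacPerm (I : Finset (Fin n)) (hI : I.card = k) (hIc : Iᶜ.card = n - k)
    (hn : k + (n - k) = n) : Perm (Fin n) :=
  ((finCongr hn.symm).trans finSumFinEquiv.symm).trans (finSumEquivOfFinset hI hIc)

lemma jacPerm_lt {I : Finset (Fin n)} {hI : I.card = k} {hIc : Iᶜ.card = n - k}
    (hn : k + (n - k) = n) (x : Fin n) (h : (x : ℕ) < k) :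
    jacPerm I hI hIc hn x = I.orderEmbOfFin hI ⟨x, h⟩ := by
  have h1 : (finCongr hn.symm x) = Fin.castAdd (n - k) ⟨x, h⟩ := by
    ext; simp
  show (finSumEquivOfFinset hI hIc) (finSumFinEquiv.symm ((finCongr hn.symm) x)) = _
  rw [h1, finSumFinEquiv_symm_apply_castAdd, finSumEquivOfFinset_inl]

lemma jacPerm_ge {I : Finset (Fin n)} {hI : I.card = k} {hIc : Iᶜ.card = n - k}
    (hn : k + (n - k) = n) (x : Fin n) (h : k ≤ (x : ℕ)) :
    jacPerm I hI hIc hn x = Iᶜ.orderEmbOfFin hIc ⟨(x : ℕ) - k, by have := x.isLt; omega⟩ := by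
  have h1 : (finCongr hn.symm x) = Fin.natAdd k ⟨(x : ℕ) - k, by have := x.isLt; omega⟩ := by
    ext; simp; omega
  show (finSumEquivOfFinset hI hIc) (finSumFinEquiv.symm ((finCongr hn.symm) x)) = _
  rw [h1, finSumFinEquiv_symm_apply_natAdd, finSumEquivOfFinset_inr]

lemma jac_le_emb (I : Finset (Fin n)) (hI : I.card = k) (p : Fin k) :
    (p : ℕ) ≤ (I.orderEmbOfFin hI p : Fin n) := by
  have key : ∀ m : ℕ, ∀ h : m < k, m ≤ ((I.orderEmbOfFin hI ⟨m, h⟩ : Fin n) : ℕ) := by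
    intro m
    induction m with
    | zero => intro h; exact Nat.zero_le _
    | succ i ih =>
      intro h
      have h' : i < k := by omega
      have h2 := ih h'
      have h3 : I.orderEmbOfFin hI ⟨i, h'⟩ < I.orderEmbOfFin hI ⟨i + 1, h⟩ :=
        (I.orderEmbOfFin hI).strictMono (by simp [Fin.lt_def])
      have := Fin.lt_def.1 h3
      omega
  exact key p p.isLt

lemma jac_count_lt (I : Finset (Fin n)) (i : Fin n) :
    (Iᶜ.filter (· < i)).card + (I.filter (· < i)).card = (i : ℕ) := by
  have h1 : (Iᶜ.filter (· < i)) ∪ (I.filter (· < i)) = univ.filter (· < i) := by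
    rw [← Finset.filter_union]
    congr 1
    ext a; simp [Decidable.em]
    exact (Decidable.em (a ∈ I)).symm.imp id id
  have h2 : Disjoint (Iᶜ.filter (· < i)) (I.filter (· < i)) :=
    Finset.disjoint_filter_filter (disjoint_compl_left)
  have h3 : (univ.filter (· < i)) = Finset.Iio i := by
    ext j; simp
  rw [← Finset.card_union_of_disjoint h2, h1, h3, Fin.card_Iio]

lemma jac_count_emb (I : Finset (Fin n)) (hI : I.card = k) (p : Fin k) :
    (I.filter (· < I.orderEmbOfFin hI p)).card = (p : ℕ) := by
  have : (I.filter (· < I.orderEmbOfFin hI p)) =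
      (univ.filter (· < p)).image (I.orderEmbOfFin hI) := by
    ext j
    simp only [Finset.mem_filter, Finset.mem_image, Finset.mem_univ, true_and]
    constructor
    · rintro ⟨hj, hlt⟩
      have hr : j ∈ Set.range (I.orderEmbOfFin hI) := by
        rw [Finset.range_orderEmbOfFin]; simpa using hj
      obtain ⟨q, rfl⟩ := hr
      exact ⟨q, by rwa [OrderEmbedding.lt_iff_lt] at hlt, rfl⟩
    · rintro ⟨q, hq, rfl⟩
      exact ⟨Finset.orderEmbOfFin_mem I hI q, (I.orderEmbOfFin hI).strictMono hq⟩
  rw [this, Finset.card_image_of_injective _ (I.orderEmbOfFin hI).injective]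
  have : (univ.filter (· < p)) = Finset.Iio p := by ext j; simp
  rw [this, Fin.card_Iio]

lemma jac_count_compl (I : Finset (Fin n)) (hIc : Iᶜ.card = n - k) (i : Fin n) :
    ((univ : Finset (Fin (n - k))).filter fun q => (Iᶜ.orderEmbOfFin hIc q : Fin n) < i).card
      = (Iᶜ.filter (· < i)).card := by
  rw [← Finset.card_image_of_injective _ (Iᶜ.orderEmbOfFin hIc).injective]
  congr 1
  ext j
  simp only [Finset.mem_image, Finset.mem_filter, Finset.mem_univ, true_and]
  constructor
  · rintro ⟨q, hq, rfl⟩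
    exact ⟨Finset.orderEmbOfFin_mem Iᶜ hIc q, hq⟩
  · rintro ⟨hj, hlt⟩
    have : j ∈ Set.range (Iᶜ.orderEmbOfFin hIc) := by
      rw [Finset.range_orderEmbOfFin]; simpa using hj
    obtain ⟨q, rfl⟩ := this
    exact ⟨q, hlt, rfl⟩

lemma jac_sign (I : Finset (Fin n)) (hI : I.card = k) (hIc : Iᶜ.card = n - k)
    (hn : k + (n - k) = n) :
    Perm.sign (jacPerm I hI hIc hn) =
      (-1) ^ ((∑ i ∈ I, (i : ℕ)) + ∑ p : Fin k, (p : ℕ)) := by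
  have hkn : k ≤ n := by omega
  set π := jacPerm I hI hIc hn with hπ
  -- block structure of inversions
  have hb : ∀ x y : Fin n, y < x → π x ≤ π y → (y : ℕ) < k ∧ k ≤ (x : ℕ) := by
    intro x y hyx hle
    by_contra hcon
    push_neg at hcon
    rcases lt_or_ge (y : ℕ) k with hy | hy
    · have hx : (x : ℕ) < k := hcon hy
      rw [jacPerm_lt hn x hx, jacPerm_lt hn y hy] at hle
      exact absurd hle (not_le.2 ((I.orderEmbOfFin hI).strictMono (by simp only [Fin.mk_lt_mk]; exact hyx)))
    · have hx : k ≤ (x : ℕ) := le_trans hy (le_of_lt hyx)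
      rw [jacPerm_ge hn x hx, jacPerm_ge hn y hy] at hle
      refine absurd hle (not_le.2 ((Iᶜ.orderEmbOfFin hIc).strictMono ?_))
      simp only [Fin.lt_def]
      have := Fin.lt_def.1 hyx
      omega
  rw [jac_sign_eq_signAux, jac_signAux_eq_pow]
  set S := (Equiv.Perm.finPairsLT n).filter fun x => π x.1 ≤ π x.2 with hS
  set T := (univ : Finset (Fin k × Fin (n - k))).filter
      (fun z => (Iᶜ.orderEmbOfFin hIc z.2 : Fin n) < I.orderEmbOfFin hI z.1) with hT
  set P := (univ : Finset (Fin n × Fin n)).filter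
      (fun z => z.2 < z.1 ∧ π z.1 ≤ π z.2) with hP
  have hSP : S.card = P.card := by
    refine Finset.card_bij' (fun a _ => (a.1, a.2)) (fun z _ => ⟨z.1, z.2⟩) ?_ ?_ ?_ ?_
    · intro a ha
      rw [hS, Finset.mem_filter] at ha
      rw [hP, Finset.mem_filter]
      exact ⟨Finset.mem_univ _, Equiv.Perm.mem_finPairsLT.1 ha.1, ha.2⟩
    · intro z hz
      rw [hP, Finset.mem_filter] at hz
      rw [hS, Finset.mem_filter]
      exact ⟨Equiv.Perm.mem_finPairsLT.2 hz.2.1, hz.2.2⟩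
    · intro a _; rfl
    · intro z _; rfl
  have hf : ∀ z : Fin k × Fin (n - k), ((k + (z.2 : ℕ) : ℕ) < n) ∧ ((z.1 : ℕ) < n) := by
    intro z
    have h1 := z.1.isLt
    have h2 := z.2.isLt
    omega
  have hPT : P = T.image (fun z : Fin k × Fin (n - k) =>
      ((⟨k + (z.2 : ℕ), (hf z).1⟩ : Fin n), (⟨(z.1 : ℕ), (hf z).2⟩ : Fin n))) := by
    ext z
    rw [hP, hT, Finset.mem_filter]
    simp only [Finset.mem_image, Finset.mem_filter, Finset.mem_univ, true_and]
    constructor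
    · rintro ⟨hlt, hle⟩
      obtain ⟨hy, hx⟩ := hb z.1 z.2 hlt hle
      refine ⟨(⟨(z.2 : ℕ), hy⟩, ⟨(z.1 : ℕ) - k, by have := z.1.isLt; omega⟩), ?_, ?_⟩
      · have e1 : π z.1 = Iᶜ.orderEmbOfFin hIc ⟨(z.1 : ℕ) - k, by have := z.1.isLt; omega⟩ :=
          jacPerm_ge hn z.1 hx
        have e2 : π z.2 = I.orderEmbOfFin hI ⟨(z.2 : ℕ), hy⟩ := jacPerm_lt hn z.2 hy
        have hne : π z.1 ≠ π z.2 := by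
          rw [e1, e2]
          intro hcontra
          have m1 := Finset.orderEmbOfFin_mem Iᶜ hIc ⟨(z.1 : ℕ) - k, by have := z.1.isLt; omega⟩
          have m2 := Finset.orderEmbOfFin_mem I hI ⟨(z.2 : ℕ), hy⟩
          rw [hcontra] at m1
          exact (Finset.mem_compl.1 m1) m2
        rw [← e1, ← e2]
        exact lt_of_le_of_ne hle hne
      · have hx2 := z.1.isLt
        apply Prod.ext <;> apply Fin.ext <;> simp <;> omega
    · rintro ⟨w, hw, rfl⟩
      constructor
      · simp [Fin.lt_def]; omega
      · have e1 : π ⟨k + (w.2 : ℕ), (hf w).1⟩ = Iᶜ.orderEmbOfFin hIc w.2 := by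
          rw [hπ, jacPerm_ge hn _ (by simp)]
          congr 1
          ext; simp
        have e2 : π ⟨(w.1 : ℕ), (hf w).2⟩ = I.orderEmbOfFin hI w.1 := by
          rw [hπ, jacPerm_lt hn _ (by simp [w.1.isLt])]
        exact le_of_lt (e1 ▸ e2 ▸ hw)
  have hinj : Function.Injective (fun z : Fin k × Fin (n - k) =>
      ((⟨k + (z.2 : ℕ), (hf z).1⟩ : Fin n), (⟨(z.1 : ℕ), (hf z).2⟩ : Fin n))) := by
    intro a b hab
    simp only [Prod.mk.injEq, Fin.mk.injEq] at hab
    apply Prod.ext <;> apply Fin.ext <;> omega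
  have hcard : S.card = T.card := by
    rw [hSP, hPT, Finset.card_image_of_injective _ hinj]
  rw [hcard]
  have hTcard : T.card = ∑ p : Fin k, (((I.orderEmbOfFin hI p : Fin n) : ℕ) - (p : ℕ)) := by
    rw [hT, Finset.card_filter, Fintype.sum_prod_type]
    refine Finset.sum_congr rfl fun p _ => ?_
    rw [← Finset.card_filter]
    show ((univ : Finset (Fin (n - k))).filter
        fun q => (Iᶜ.orderEmbOfFin hIc) q < (I.orderEmbOfFin hI) p).card = _
    have h1 := jac_count_compl I hIc (I.orderEmbOfFin hI p)
    have h2 := jac_count_lt I (I.orderEmbOfFin hI p)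
    have h3 := jac_count_emb I hI p
    omega
  rw [hTcard]
  have hle := fun p : Fin k => jac_le_emb I hI p
  have himg : univ.image (I.orderEmbOfFin hI) = I := by
    ext j
    simp only [Finset.mem_image, Finset.mem_univ, true_and]
    constructor
    · rintro ⟨q, rfl⟩; exact Finset.orderEmbOfFin_mem I hI q
    · intro hj
      have : j ∈ Set.range (I.orderEmbOfFin hI) := by
        rw [Finset.range_orderEmbOfFin]; simpa using hj
      obtain ⟨q, rfl⟩ := this; exact ⟨q, rfl⟩
  have hsum : ∑ i ∈ I, (i : ℕ) = ∑ p : Fin k, ((I.orderEmbOfFin hI p : Fin n) : ℕ) := by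
    conv_lhs => rw [← himg]
    exact Finset.sum_image (fun x _ y _ h => (I.orderEmbOfFin hI).injective h)
  have key : (∑ i ∈ I, (i : ℕ)) + ∑ p : Fin k, (p : ℕ)
      = (∑ p : Fin k, (((I.orderEmbOfFin hI p : Fin n) : ℕ) - (p : ℕ)))
        + 2 * ∑ p : Fin k, (p : ℕ) := by
    have h4 : ∑ p : Fin k, ((I.orderEmbOfFin hI p : Fin n) : ℕ)
        = ∑ p : Fin k, ((((I.orderEmbOfFin hI p : Fin n) : ℕ) - (p : ℕ)) + (p : ℕ)) :=
      Finset.sum_congr rfl fun p _ => (Nat.sub_add_cancel (hle p)).symm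
    rw [hsum, h4, Finset.sum_add_distrib]
    ring
  rw [key, pow_add, mul_comm 2, pow_mul]
  norm_num

lemma jac_block {R : Type*} [CommRing R] {n k m : ℕ} (A : Matrix (Fin n) (Fin n) R)
    (σ τ : Fin k ⊕ Fin m ≃ Fin n) :
    (A.submatrix σ τ).det *
      (Matrix.of fun p q : Fin k => A.adjugate (τ (Sum.inl p)) (σ (Sum.inl q))).det
    = A.det ^ k *
      (Matrix.of fun p q : Fin m => A (σ (Sum.inr p)) (τ (Sum.inr q))).det := by
  set A' := A.submatrix σ τ with hA'
  set C := (A.adjugate).submatrix τ σ with hC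
  have hAC : A' * C = A.det • 1 := by
    rw [hA', hC, Matrix.submatrix_mul_equiv, Matrix.mul_adjugate]
    ext i j
    simp [Matrix.one_apply]
  set D := Matrix.fromBlocks (C.toBlocks₁₁) (0 : Matrix (Fin k) (Fin m) R) (C.toBlocks₂₁)
      (1 : Matrix (Fin m) (Fin m) R) with hD
  have key : A' * D = Matrix.fromBlocks (A.det • 1) (A'.toBlocks₁₂) 0 (A'.toBlocks₂₂) := by
    ext i j
    rcases j with q | q
    · have h1 : (A' * D) i (Sum.inl q) = (A' * C) i (Sum.inl q) := by
        simp only [Matrix.mul_apply]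
        refine Finset.sum_congr rfl fun x _ => ?_
        rcases x with x | x <;> rfl
      rw [h1, hAC]
      rcases i with p | p
      · simp [Matrix.one_apply, Sum.inl.injEq]
      · simp [Matrix.one_apply]
    · rcases i with p | p
      · simp [Matrix.mul_apply, Fintype.sum_sum_type, hD, Matrix.one_apply, mul_ite,
          Matrix.toBlocks₁₂]
      · simp [Matrix.mul_apply, Fintype.sum_sum_type, hD, Matrix.one_apply, mul_ite,
          Matrix.toBlocks₂₂]
  have hdetD : D.det = (C.toBlocks₁₁).det := by
    rw [hD, Matrix.det_fromBlocks_zero₁₂, Matrix.det_one, mul_one]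
  have hdet : A'.det * (C.toBlocks₁₁).det = A.det ^ k * (A'.toBlocks₂₂).det := by
    rw [← hdetD, ← Matrix.det_mul, key, Matrix.det_fromBlocks_zero₂₁, Matrix.det_smul,
      Matrix.det_one, Fintype.card_fin, mul_one]
  have e1 : (Matrix.of fun p q : Fin k => A.adjugate (τ (Sum.inl p)) (σ (Sum.inl q)))
      = C.toBlocks₁₁ := rfl
  have e2 : (Matrix.of fun p q : Fin m => A (σ (Sum.inr p)) (τ (Sum.inr q)))
      = A'.toBlocks₂₂ := rfl
  rw [e1, e2, hdet]

lemma jac_mul {R : Type*} [CommRing R] {n k : ℕ} (A : Matrix (Fin n) (Fin n) R)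
    (I J : Finset (Fin n)) (hI : I.card = k) (hJ : J.card = k)
    (hIc : (Iᶜ).card = n - k) (hJc : (Jᶜ).card = n - k) :
    A.det * (Matrix.of fun p q : Fin k =>
        A.adjugate ((J.orderIsoOfFin hJ q : Fin n)) ((I.orderIsoOfFin hI p : Fin n))).det
    = (-1 : R) ^ ((∑ i ∈ I, (i : ℕ)) + ∑ j ∈ J, (j : ℕ)) * A.det ^ k *
      (Matrix.det (Matrix.of fun p q : Fin (n - k) =>
        A (((Iᶜ).orderIsoOfFin hIc p : Fin n)) (((Jᶜ).orderIsoOfFin hJc q : Fin n)))) := by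
  have hkn : k ≤ n := by
    have := Finset.card_le_univ I
    simpa [hI] using this
  have hn : k + (n - k) = n := by omega
  set σ := finSumEquivOfFinset hI hIc with hσdef
  set τ := finSumEquivOfFinset hJ hJc with hτdef
  set b : Fin k ⊕ Fin (n - k) ≃ Fin n := finSumFinEquiv.trans (finCongr hn) with hbdef
  set πI := jacPerm I hI hIc hn with hπI
  set πJ := jacPerm J hJ hJc hn with hπJ
  set L := Matrix.of fun p q : Fin k =>
      A.adjugate ((J.orderIsoOfFin hJ q : Fin n)) ((I.orderIsoOfFin hI p : Fin n)) with hL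
  set m := Matrix.of fun p q : Fin (n - k) =>
      A (((Iᶜ).orderIsoOfFin hIc p : Fin n)) (((Jᶜ).orderIsoOfFin hJc q : Fin n)) with hm
  have hblock := jac_block A σ τ
  have hLeq : (Matrix.of fun p q : Fin k =>
      A.adjugate (τ (Sum.inl p)) (σ (Sum.inl q))) = Lᵀ := by
    ext p q
    simp [hL, hσdef, hτdef, Finset.coe_orderIsoOfFin_apply, Matrix.transpose_apply]
  have hmeq : (Matrix.of fun p q : Fin (n - k) =>
      A (σ (Sum.inr p)) (τ (Sum.inr q))) = m := by
    ext p q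
    simp [hm, hσdef, hτdef, Finset.coe_orderIsoOfFin_apply]
  have hsub : A.submatrix σ τ = (A.submatrix πI πJ).submatrix b b := by
    ext s t
    simp [hπI, hπJ, jacPerm, hbdef, Matrix.submatrix_apply, hσdef, hτdef]
  have hdet1 : (A.submatrix σ τ).det =
      ((Perm.sign πI : ℤ) : R) * (((Perm.sign πJ : ℤ) : R) * A.det) := by
    rw [hsub, Matrix.det_submatrix_equiv_self]
    have e1 : A.submatrix πI πJ = (A.submatrix id πJ).submatrix πI id := rfl
    rw [e1, Matrix.det_permute, Matrix.det_permute']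
  have hb2 : ((Perm.sign πI : ℤ) : R) * (((Perm.sign πJ : ℤ) : R) * A.det) * Lᵀ.det
      = A.det ^ k * m.det := by
    rw [← hdet1, ← hLeq, ← hmeq]
    exact hblock
  set c : R := (-1 : R) ^ ((∑ i ∈ I, (i : ℕ)) + ∑ j ∈ J, (j : ℕ)) with hc
  have hsign : ((Perm.sign πI : ℤ) : R) * ((Perm.sign πJ : ℤ) : R) = c := by
    rw [hπI, hπJ, jac_sign, jac_sign, hc]
    push_cast
    rw [← pow_add]
    have : ((∑ i ∈ I, (i : ℕ)) + ∑ p : Fin k, (p : ℕ))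
        + ((∑ j ∈ J, (j : ℕ)) + ∑ p : Fin k, (p : ℕ))
        = ((∑ i ∈ I, (i : ℕ)) + ∑ j ∈ J, (j : ℕ)) + 2 * ∑ p : Fin k, (p : ℕ) := by ring
    rw [this, pow_add, pow_mul]
    norm_num
  have hcc : c * c = 1 := by
    rw [hc, ← pow_add, ← two_mul, pow_mul]
    norm_num
  have hb3 : c * A.det * Lᵀ.det = A.det ^ k * m.det := by
    rw [← hsign, ← hb2]; ring
  have hdT : Lᵀ.det = L.det := Matrix.det_transpose L
  calc A.det * L.det = c * c * (A.det * L.det) := by rw [hcc, one_mul]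
    _ = c * (c * A.det * Lᵀ.det) := by rw [hdT]; ring
    _ = c * (A.det ^ k * m.det) := by rw [hb3]
    _ = c * A.det ^ k * m.det := by ring


/-- Jacobi's theorem on minors of the cofactor matrix: for an `n × n` matrix `A` and
index sets `I, J` of size `k ≥ 1`,
`det((A^C)_{I,J}) = (-1)^{∑I+∑J} det(A)^{k-1} det(A_{[n]∖I,[n]∖J})`,
where `A^C = (adjugate A)ᵀ` is the cofactor matrix (so `(A^C)_{ij} = adjugate A j i`). -/
theorem stmt14 (n k : ℕ) (hk : 1 ≤ k) (A : Matrix (Fin n) (Fin n) ℚ)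
    (I J : Finset (Fin n)) (hI : I.card = k) (hJ : J.card = k)
    (hIc : (Iᶜ).card = n - k) (hJc : (Jᶜ).card = n - k) :
    Matrix.det (Matrix.of fun p q : Fin k =>
        A.adjugate ((J.orderIsoOfFin hJ q : Fin n)) ((I.orderIsoOfFin hI p : Fin n)))
      = (-1 : ℚ) ^ ((∑ i ∈ I, (i : ℕ)) + ∑ j ∈ J, (j : ℕ)) *
          A.det ^ (k - 1) *
          Matrix.det (Matrix.of fun p q : Fin (n - k) =>
            A (((Iᶜ).orderIsoOfFin hIc p : Fin n)) (((Jᶜ).orderIsoOfFin hJc q : Fin n))) := by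
  classical
  set φ : Polynomial ℚ →+* ℚ := Polynomial.evalRingHom (0 : ℚ) with hφ
  set Ah : Matrix (Fin n) (Fin n) (Polynomial ℚ) :=
    A.map Polynomial.C + (Polynomial.X : Polynomial ℚ) • 1 with hAh
  have hchar : Ah = Matrix.charmatrix (-A) := by
    ext i j
    simp [hAh, Matrix.charmatrix_apply, Matrix.one_apply, Matrix.diagonal_apply, mul_ite,
      sub_neg_eq_add, add_comm]
  have hd : Ah.det ≠ 0 := by
    rw [hchar]
    exact (Matrix.charpoly_monic (-A)).ne_zero
  have hmain := jac_mul Ah I J hI hJ hIc hJc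
  have hk' : Ah.det ^ k = Ah.det * Ah.det ^ (k - 1) := by
    conv_lhs => rw [show k = (k - 1) + 1 by omega]
    rw [pow_succ']
  rw [hk'] at hmain
  have hcancel : (Matrix.of fun p q : Fin k =>
        Ah.adjugate ((J.orderIsoOfFin hJ q : Fin n)) ((I.orderIsoOfFin hI p : Fin n))).det
      = (-1 : Polynomial ℚ) ^ ((∑ i ∈ I, (i : ℕ)) + ∑ j ∈ J, (j : ℕ)) *
          Ah.det ^ (k - 1) *
          (Matrix.of fun p q : Fin (n - k) =>
            Ah (((Iᶜ).orderIsoOfFin hIc p : Fin n)) (((Jᶜ).orderIsoOfFin hJc q : Fin n))).det := by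
    refine mul_left_cancel₀ hd ?_
    rw [hmain]; ring
  have hmap : Ah.map φ = A := by
    ext i j
    by_cases h : i = j <;>
      simp [hAh, Matrix.map_apply, Matrix.add_apply, Matrix.smul_apply, Matrix.one_apply, h, hφ]
  have hadj : (Ah.adjugate).map φ = A.adjugate := by
    have h2 := φ.map_adjugate Ah
    rw [RingHom.mapMatrix_apply, RingHom.mapMatrix_apply] at h2
    rw [h2, hmap]
  have happ := congrArg φ hcancel
  rw [RingHom.map_det, _root_.map_mul, _root_.map_mul, map_pow, map_neg, _root_.map_one,
    map_pow, RingHom.map_det, RingHom.map_det, RingHom.mapMatrix_apply, RingHom.mapMatrix_apply,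
    RingHom.mapMatrix_apply] at happ
  have eL : ((Matrix.of fun p q : Fin k =>
        Ah.adjugate ((J.orderIsoOfFin hJ q : Fin n)) ((I.orderIsoOfFin hI p : Fin n))).map φ)
      = (Matrix.of fun p q : Fin k =>
        A.adjugate ((J.orderIsoOfFin hJ q : Fin n)) ((I.orderIsoOfFin hI p : Fin n))) := by
    ext p q
    show φ (Ah.adjugate _ _) = _
    rw [← hadj]
    rfl
  have em2 : ((Matrix.of fun p q : Fin (n - k) =>
        Ah (((Iᶜ).orderIsoOfFin hIc p : Fin n)) (((Jᶜ).orderIsoOfFin hJc q : Fin n))).map φ)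
      = (Matrix.of fun p q : Fin (n - k) =>
        A (((Iᶜ).orderIsoOfFin hIc p : Fin n)) (((Jᶜ).orderIsoOfFin hJc q : Fin n))) := by
    ext p q
    show φ (Ah _ _) = _
    rw [← hmap]
    rfl
  rw [eL, em2, hmap] at happ
  exact happ
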